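/- Conversely: let A = (a_1, ..., a_m) be an OA(n, m, s, 3) such that every child of A obtained by branching column a_1 is embeddable, i.e., for each level ℓ there exists a column e_ℓ of length n/s over {0,...,s-1} making (rows of (a_2,...,a_m) with a_1 = ℓ, augmented by e_ℓ) an OA(n/s, m, s, 2). Then there exists a single column b_1 of length n over {0,...,s-1} such that (a_1, a_j, b_1) is an OA(n, 3, s, 3) for every j = 2, ..., m. -/

import Mathlib

open Finset

/-- `A` is an orthogonal array OA(n, m, s, t): an array with row-index type `R` of
cardinality `n`, `m` columns, entries in `{0,...,s-1}`, such that in every choice of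
`t` distinct columns every `t`-tuple of levels appears exactly `n / s^t` times. -/
def isOA {R : Type} [Fintype R] (n : ℕ) {m : ℕ} (s t : ℕ) (A : R → Fin m → Fin s) : Prop :=
  Fintype.card R = n ∧
  ∀ cols : Fin t → Fin m, Function.Injective cols →
    ∀ vals : Fin t → Fin s,
      (Finset.univ.filter (fun r => ∀ k, A r (cols k) = vals k)).card * s ^ t = n

/-- The child array of `A` obtained by branching column `j` at level `ℓ`:
restrict to the rows with entry `ℓ` in column `j` and delete column `j`. -/
def child {n m s : ℕ} (A : Fin n → Fin (m + 1) → Fin s) (j : Fin (m + 1)) (ℓ : Fin s) :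
    {r : Fin n // A r j = ℓ} → Fin m → Fin s :=
  fun r k => A r.1 (j.succAbove k)

/-- `B` is embeddable: it can be extended by one column to an OA(n, m+1, s, t). -/
def isEmbeddable {R : Type} [Fintype R] (n : ℕ) {m : ℕ} (s t : ℕ) (B : R → Fin m → Fin s) : Prop :=
  ∃ e : R → Fin s, isOA n s t (fun r => Fin.snoc (B r) (e r))

/-- Number of coincidences (agreeing coordinates) between rows `r` and `c` of `A`. -/
def coinc {n m s : ℕ} (A : Fin n → Fin m → Fin s) (r c : Fin n) : ℕ :=
  (Finset.univ.filter (fun j => A r j = A c j)).card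

/-- `nCoinc A c i` is the number of rows of `A` other than row `c` that agree with
row `c` in exactly `i` coordinates. -/
def nCoinc {n m s : ℕ} (A : Fin n → Fin m → Fin s) (c : Fin n) (i : ℕ) : ℕ :=
  (Finset.univ.filter (fun r => r ≠ c ∧ coinc A r c = i)).card

/-- Three `ℕ`-valued columns of length `n` form an OA(n, 3, s, 3). -/
def isOA3N (n s : ℕ) (x y z : Fin n → ℕ) : Prop :=
  ∀ v1 v2 v3 : ℕ, v1 < s → v2 < s → v3 < s →
    (Finset.univ.filter (fun r => x r = v1 ∧ y r = v2 ∧ z r = v3)).card * s ^ 3 = n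

/-- Generalized orthogonal array GOA(n, m, s, 3), with column groups `(a i, b i, c i)`. -/
def isGOA3 (n m s : ℕ) (a b c : Fin m → Fin n → ℕ) : Prop :=
  (∀ i r, a i r < s ∧ b i r < s ∧ c i r < s) ∧
  (∀ i j k : Fin m, i < j → j < k → isOA3N n s (a i) (a j) (a k)) ∧
  (∀ i j : Fin m, i ≠ j → isOA3N n s (a i) (b i) (a j)) ∧
  (∀ i : Fin m, isOA3N n s (a i) (b i) (c i))

/-- Strong orthogonal array SOA(n, m, s^3, 3): entries in `{0,...,s^3-1}`, and for every
`g ∈ {1,2,3}`, every choice of `g` distinct columns and positive `u 0 + ⋯ + u (g-1) = 3`,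
collapsing the `k`-th chosen column via `a ↦ a / s^(3 - u k)` yields a mixed-level
orthogonal array of strength `g` (every collapsed level combination appears `n / s^3` times). -/
def isSOA3 (n m s : ℕ) (D : Fin n → Fin m → ℕ) : Prop :=
  (∀ r i, D r i < s ^ 3) ∧
  ∀ g : ℕ, 1 ≤ g → g ≤ 3 →
    ∀ cols : Fin g → Fin m, Function.Injective cols →
      ∀ u : Fin g → ℕ, (∀ k, 1 ≤ u k) → (∑ k, u k) = 3 →
        ∀ vals : Fin g → ℕ, (∀ k, vals k < s ^ u k) →
          (Finset.univ.filter (fun r => ∀ k, D r (cols k) / s ^ (3 - u k) = vals k)).card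
            * s ^ 3 = n

/-- `ℕ`-valued orthogonal array OA(n, m, s, t). -/
def isOAN (n m s t : ℕ) (A : Fin n → Fin m → ℕ) : Prop :=
  (∀ r j, A r j < s) ∧
  ∀ cols : Fin t → Fin m, Function.Injective cols →
    ∀ vals : Fin t → ℕ, (∀ k, vals k < s) →
      (Finset.univ.filter (fun r => ∀ k, A r (cols k) = vals k)).card * s ^ t = n

lemma isOA3_of_id {n s : ℕ} (M : Fin n → Fin 3 → Fin s)
    (h : ∀ v : Fin 3 → Fin s,
      (Finset.univ.filter (fun r => ∀ k, M r k = v k)).card * s ^ 3 = n) :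
    isOA n s 3 M := by
  refine ⟨by simp, ?_⟩
  intro cols hinj vals
  have hbij : Function.Bijective cols := Finite.injective_iff_bijective.mp hinj
  let σ := Equiv.ofBijective cols hbij
  have hh := h (fun k => vals (σ.symm k))
  have hset : (Finset.univ.filter (fun r => ∀ k, M r (cols k) = vals k)) =
      (Finset.univ.filter (fun r => ∀ k, M r k = vals (σ.symm k))) := by
    apply Finset.filter_congr
    intro r _
    constructor
    · intro hr k
      have := hr (σ.symm k)
      have hc : cols (σ.symm k) = k := σ.apply_symm_apply k
      rwa [hc] at this
    · intro hr k
      have := hr (cols k)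
      have hc : σ.symm (cols k) = k := σ.symm_apply_apply k
      rwa [hc] at this
  rw [hset]; exact hh

/-- Conversely, if every child of an OA(n, m+1, s, 3) `A` from branching
column `0` is embeddable, then there is a single column `b₁` such that `(a₁, a_j, b₁)`
is an OA(n, 3, s, 3) for every `j ≠ 1`. -/
theorem b1_of_children_embeddable (n m s : ℕ)
    (A : Fin n → Fin (m + 1) → Fin s) (hOA : isOA n s 3 A)
    (hemb : ∀ ℓ : Fin s, ∃ e : {r : Fin n // A r 0 = ℓ} → Fin s,
      isOA (n / s) s 2 (fun r => Fin.snoc (child A 0 ℓ r) (e r))) :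
    ∃ b₁ : Fin n → Fin s, ∀ j : Fin (m + 1), j ≠ 0 →
      isOA n s 3 (fun r => ![A r 0, A r j, b₁ r]) := by
  choose e he using hemb
  have ecast : ∀ (r : Fin n) (ℓ : Fin s) (h : A r 0 = ℓ),
      e (A r 0) ⟨r, rfl⟩ = e ℓ ⟨r, h⟩ := by
    intro r ℓ h; subst h; rfl
  refine ⟨fun r => e (A r 0) ⟨r, rfl⟩, ?_⟩
  intro j hj
  have hfib : ∀ ℓ : Fin s, Fintype.card {r : Fin n // A r 0 = ℓ} = n / s :=
    fun ℓ => (he ℓ).1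
  have hsum : (n / s) * s = n := by
    have hc : ∑ ℓ : Fin s, Fintype.card {r : Fin n // A r 0 = ℓ} = n := by
      rw [← Fintype.card_sigma,
        Fintype.card_congr (Equiv.sigmaFiberEquiv (fun r : Fin n => A r 0))]
      simp
    have hc2 : ∑ ℓ : Fin s, Fintype.card {r : Fin n // A r 0 = ℓ} = s * (n / s) := by
      simp only [hfib, Finset.sum_const, Finset.card_univ, Fintype.card_fin, smul_eq_mul]
    rw [mul_comm, ← hc2]; exact hc
  set k : Fin m := j.pred hj with hk
  have hjk : Fin.succ k = j := Fin.succ_pred j hj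
  apply isOA3_of_id
  intro v
  have hfilter : (Finset.univ.filter (fun r => ∀ t : Fin 3, ![A r 0, A r j,
      e (A r 0) ⟨r, rfl⟩] t = v t)) =
      Finset.univ.filter (fun r => A r 0 = v 0 ∧ A r j = v 1 ∧
        e (A r 0) ⟨r, rfl⟩ = v 2) := by
    apply Finset.filter_congr
    intro r _
    constructor
    · intro h; exact ⟨h 0, h 1, h 2⟩
    · rintro ⟨h0, h1, h2⟩ t
      fin_cases t <;> simpa
  rw [hfilter]
  have hcols : Function.Injective ![Fin.castSucc k, Fin.last m] := by
    intro a b hab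
    fin_cases a <;> fin_cases b <;> simp_all
    · exact absurd hab (Fin.castSucc_lt_last k).ne'
  have h2 := (he (v 0)).2 ![Fin.castSucc k, Fin.last m] hcols ![v 1, v 2]
  have hchild : (Finset.univ.filter (fun r : {r : Fin n // A r 0 = v 0} =>
      ∀ t : Fin 2, (Fin.snoc (child A 0 (v 0) r) (e (v 0) r) : Fin (m + 1) → Fin s)
        (![Fin.castSucc k, Fin.last m] t) = ![v 1, v 2] t)) =
      Finset.univ.filter (fun r : {r : Fin n // A r 0 = v 0} =>
        A r.1 j = v 1 ∧ e (v 0) r = v 2) := by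
    apply Finset.filter_congr
    intro r _
    constructor
    · intro h
      have h0 := h 0
      have h1 := h 1
      simp only [Matrix.cons_val_zero, Matrix.cons_val_one, Matrix.head_cons,
        Fin.snoc_castSucc, Fin.snoc_last] at h0 h1
      refine ⟨?_, h1⟩
      rw [← h0]; unfold child; rw [Fin.zero_succAbove, hjk]
    · rintro ⟨h0, h1⟩ t
      fin_cases t <;>
        simp [child, Fin.snoc_castSucc, Fin.snoc_last, Fin.zero_succAbove, hjk, h0, h1]
  rw [hchild] at h2
  have hcard : (Finset.univ.filter (fun r => A r 0 = v 0 ∧ A r j = v 1 ∧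
        e (A r 0) ⟨r, rfl⟩ = v 2)).card =
      (Finset.univ.filter (fun r : {r : Fin n // A r 0 = v 0} =>
        A r.1 j = v 1 ∧ e (v 0) r = v 2)).card := by
    apply Finset.card_bij (fun r hr => (⟨r, (Finset.mem_filter.mp hr).2.1⟩ :
      {r : Fin n // A r 0 = v 0}))
    · intro r hr
      obtain ⟨-, h0, h1, h2'⟩ := Finset.mem_filter.mp hr
      refine Finset.mem_filter.mpr ⟨Finset.mem_univ _, h1, ?_⟩
      rw [← ecast r (v 0) h0]; exact h2'
    · intro a ha b hb hab
      exact Subtype.mk_eq_mk.mp hab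
    · intro b hb
      obtain ⟨-, h1, h2'⟩ := Finset.mem_filter.mp hb
      refine ⟨b.1, Finset.mem_filter.mpr ⟨Finset.mem_univ _, b.2, h1, ?_⟩, rfl⟩
      rw [ecast b.1 (v 0) b.2]; exact h2'
  rw [hcard]
  have hpow : s ^ 3 = s ^ 2 * s := by ring
  rw [hpow, ← mul_assoc, h2, hsum]
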